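/- Let ℓ₁, ℓ₂, ℓ₃ be three affine (degree ≤ 1) polynomials on ℝ² that are pairwise non-proportional and each non-constant (so their zero sets are three pairwise distinct lines). If a polynomial p on ℝ² vanishes identically on each of the three lines {ℓ_i = 0}, then ℓ₁ℓ₂ℓ₃ divides p; that is, p = ℓ₁ℓ₂ℓ₃ q for some polynomial q with deg q ≤ deg p − 3. -/

import Mathlib

open MvPolynomial

private lemma eq_C_of_tdeg_zero {σ : Type*} {R : Type*} [CommRing R] {f : MvPolynomial σ R}
    (h : f.totalDegree = 0) : f = C (MvPolynomial.coeff 0 f) := by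
  classical
  ext d
  by_cases hd : d = 0
  · subst hd; simp
  · rw [MvPolynomial.coeff_C, if_neg (Ne.symm hd)]
    by_contra hc
    have hds : d ∈ f.support := MvPolynomial.mem_support_iff.mpr hc
    have := (MvPolynomial.totalDegree_eq_zero_iff _ f).mp h d hds
    exact hd (Finsupp.ext this)

private lemma tdeg_eq_degree_sum {σ : Type*} (d : σ →₀ ℕ) :
    (d.sum fun _ e => e) = Finsupp.degree d := rfl

private lemma top_comp_ne_zero {σ : Type*} {R : Type*} [CommRing R] {f : MvPolynomial σ R}
    (hf : f ≠ 0) : homogeneousComponent f.totalDegree f ≠ 0 := by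
  classical
  have hsup : f.support.Nonempty := by
    rw [Finset.nonempty_iff_ne_empty, Ne, MvPolynomial.support_eq_empty]; exact hf
  obtain ⟨d, hd, hdeg⟩ := Finset.exists_mem_eq_sup f.support hsup
    (fun s => s.sum fun _ e => e)
  intro h0
  have hcoeff : coeff d (homogeneousComponent f.totalDegree f) = coeff d f := by
    rw [coeff_homogeneousComponent, if_pos]
    rw [← tdeg_eq_degree_sum, MvPolynomial.totalDegree, hdeg]
  rw [h0] at hcoeff
  exact (MvPolynomial.mem_support_iff.mp hd) (by simpa using hcoeff.symm)

private lemma degree_add' {σ : Type*} (d1 d2 : σ →₀ ℕ) :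
    Finsupp.degree (d1 + d2) = Finsupp.degree d1 + Finsupp.degree d2 := by
  simp [Finsupp.degree_eq_weight_one, map_add]

private lemma totalDegree_mul_eq {σ : Type*} {R : Type*} [CommRing R] [IsDomain R]
    {f g : MvPolynomial σ R} (hf : f ≠ 0) (hg : g ≠ 0) :
    (f * g).totalDegree = f.totalDegree + g.totalDegree := by
  classical
  refine le_antisymm (MvPolynomial.totalDegree_mul f g) ?_
  set m := f.totalDegree
  set n := g.totalDegree
  set F := homogeneousComponent m f with hF
  set G := homogeneousComponent n g with hG
  have hH : (F * G).IsHomogeneous (m + n) :=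
    (homogeneousComponent_isHomogeneous m f).mul (homogeneousComponent_isHomogeneous n g)
  have hHne : F * G ≠ 0 := mul_ne_zero (top_comp_ne_zero hf) (top_comp_ne_zero hg)
  obtain ⟨d, hd⟩ : ∃ d, d ∈ (F * G).support := by
    have : (F * G).support.Nonempty := by
      rw [Finset.nonempty_iff_ne_empty, Ne, MvPolynomial.support_eq_empty]; exact hHne
    exact this
  have hdd : Finsupp.degree d = m + n := by
    have := hH (MvPolynomial.mem_support_iff.mp hd)
    rwa [Finsupp.degree_eq_weight_one]
  have hkey : coeff d (f * g) = coeff d (F * G) := by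
    rw [MvPolynomial.coeff_mul, MvPolynomial.coeff_mul]
    refine Finset.sum_congr rfl ?_
    rintro ⟨d1, d2⟩ hmem
    have hsum : d1 + d2 = d := Finset.HasAntidiagonal.mem_antidiagonal.mp hmem
    have hdsum : Finsupp.degree d1 + Finsupp.degree d2 = m + n := by
      rw [← degree_add', hsum, hdd]
    simp only
    by_cases h1 : Finsupp.degree d1 = m
    · have h2 : Finsupp.degree d2 = n := by omega
      rw [hF, hG, coeff_homogeneousComponent, coeff_homogeneousComponent,
        if_pos h1, if_pos h2]
    · rcases lt_or_gt_of_ne h1 with hlt | hgt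
      · have h2 : n < Finsupp.degree d2 := by omega
        have : coeff d2 g = 0 :=
          MvPolynomial.coeff_eq_zero_of_totalDegree_lt (by simpa [Finsupp.degree_apply] using h2)
        have hG2 : coeff d2 G = 0 := by
          rw [hG, coeff_homogeneousComponent]
          split <;> simp [this]
        rw [this, hG2, mul_zero, mul_zero]
      · have : coeff d1 f = 0 :=
          MvPolynomial.coeff_eq_zero_of_totalDegree_lt (by simpa [Finsupp.degree_apply] using hgt)
        have hF1 : coeff d1 F = 0 := by
          rw [hF, coeff_homogeneousComponent]
          split <;> simp [this]
        rw [this, hF1, zero_mul, zero_mul]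
  have hne : coeff d (f * g) ≠ 0 := by
    rw [hkey]; exact MvPolynomial.mem_support_iff.mp hd
  have := MvPolynomial.le_totalDegree (p := f * g) (s := d)
    (MvPolynomial.mem_support_iff.mpr hne)
  rwa [tdeg_eq_degree_sum, hdd] at this
private lemma dvd_of_vanishing_aux (l p : MvPolynomial (Fin 2) ℝ)
    (hl : l.totalDegree = 1) (hd0 : l.degreeOf 0 = 1)
    (h : ∀ v : Fin 2 → ℝ, eval v l = 0 → eval v p = 0) : l ∣ p := by
  classical
  set e := finSuccEquiv ℝ 1 with he
  have hl0 : l ≠ 0 := fun h0 => by simp [h0] at hl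
  have hLdeg : (e l).natDegree = 1 := by
    rw [he, natDegree_finSuccEquiv]; exact hd0
  have hLne : e l ≠ 0 := fun h0 => hl0 (by
    have := congrArg e.symm h0
    simpa using this)
  have hco1 : (e l).coeff 1 ≠ 0 := by
    have h' := mt Polynomial.leadingCoeff_eq_zero.mp hLne
    rwa [Polynomial.leadingCoeff, hLdeg] at h'
  have htd : ((e l).coeff 1).totalDegree = 0 := by
    have := totalDegree_coeff_finSuccEquiv_add_le l 1 (by rwa [← he])
    rw [hl] at this
    rw [← he] at this
    omega
  set a : ℝ := MvPolynomial.coeff 0 ((e l).coeff 1) with ha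
  have hCa : (e l).coeff 1 = C a := eq_C_of_tdeg_zero htd
  have ha0 : a ≠ 0 := fun h0 => hco1 (by rw [hCa, h0, map_zero])
  set g : MvPolynomial (Fin 1) ℝ := (e l).coeff 0 with hg
  have hrepr : e l = Polynomial.C (C a) * Polynomial.X + Polynomial.C g := by
    conv_lhs => rw [Polynomial.eq_X_add_C_of_natDegree_le_one hLdeg.le]
    rw [hCa]
  set c : MvPolynomial (Fin 1) ℝ := -(C a⁻¹ * g) with hc
  have hroot : (e p).eval c = 0 := by
    apply MvPolynomial.funext
    intro s
    have hx : eval (Fin.cons (eval s c) s) l = 0 := by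
      rw [eval_eq_eval_mv_eval' s (eval s c) l, ← he, hrepr]
      simp only [Polynomial.map_add, Polynomial.map_mul, Polynomial.map_C, Polynomial.map_X,
        Polynomial.eval_add, Polynomial.eval_mul, Polynomial.eval_C, Polynomial.eval_X,
        MvPolynomial.eval_C, hc]
      rw [map_neg, map_mul, MvPolynomial.eval_C]
      rw [mul_neg, ← mul_assoc, mul_inv_cancel₀ ha0, one_mul]
      ring
    have hp0 := h _ hx
    rw [eval_eq_eval_mv_eval' s (eval s c) p, ← he] at hp0
    have heq : eval s ((e p).eval c) =
        Polynomial.eval (eval s c) (Polynomial.map (eval s) (e p)) := by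
      rw [Polynomial.eval_map]
      exact (Polynomial.eval₂_hom (eval s) c).symm
    rw [heq, hp0, map_zero]
  have hdvd : Polynomial.X - Polynomial.C c ∣ e p := Polynomial.dvd_iff_isRoot.mpr hroot
  have hfac : e l = Polynomial.C (C a) * (Polynomial.X - Polynomial.C c) := by
    rw [hrepr, mul_sub, ← Polynomial.C_mul]
    have : (C a : MvPolynomial (Fin 1) ℝ) * c = -g := by
      rw [hc, mul_neg, ← mul_assoc, ← MvPolynomial.C_mul, mul_inv_cancel₀ ha0, C_1, one_mul]
    rw [this]
    simp [sub_neg_eq_add]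
  have hunit : IsUnit (Polynomial.C (C a) : Polynomial (MvPolynomial (Fin 1) ℝ)) := by
    have : IsUnit a := isUnit_iff_ne_zero.mpr ha0
    exact (this.map (MvPolynomial.C : ℝ →+* MvPolynomial (Fin 1) ℝ)).map
      (Polynomial.C : MvPolynomial (Fin 1) ℝ →+* Polynomial (MvPolynomial (Fin 1) ℝ))
  have hedvd : e l ∣ e p := by
    rw [hfac, hunit.mul_left_dvd]
    exact hdvd
  have := map_dvd e.symm hedvd
  simpa using this
private lemma dvd_of_vanishing (l p : MvPolynomial (Fin 2) ℝ)
    (hl : l.totalDegree = 1)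
    (h : ∀ v : Fin 2 → ℝ, eval v l = 0 → eval v p = 0) : l ∣ p := by
  classical
  have hl0 : l ≠ 0 := fun h0 => by simp [h0] at hl
  have hle0 : l.degreeOf 0 ≤ 1 := by
    have := degreeOf_le_totalDegree l 0
    omega
  by_cases hd0 : l.degreeOf 0 = 1
  · exact dvd_of_vanishing_aux l p hl hd0 h
  · have hd0' : l.degreeOf 0 = 0 := by omega
    have hd1 : l.degreeOf 1 = 1 := by
      have hle1 : l.degreeOf 1 ≤ 1 := by
        have := degreeOf_le_totalDegree l 1
        omega
      rcases Nat.lt_or_ge (l.degreeOf 1) 1 with h1 | h1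
      · exfalso
        have h1' : l.degreeOf 1 = 0 := by omega
        have : l.totalDegree = 0 := by
          rw [MvPolynomial.totalDegree]
          apply Nat.le_zero.mp
          apply Finset.sup_le
          intro d hd
          have h0 : d 0 = 0 := by
            have h' := Finset.le_sup (f := fun m : Fin 2 →₀ ℕ => m 0) hd
            rw [← degreeOf_eq_sup 0 l, hd0'] at h'
            exact Nat.le_zero.mp h'
          have h1'' : d 1 = 0 := by
            have h' := Finset.le_sup (f := fun m : Fin 2 →₀ ℕ => m 1) hd
            rw [← degreeOf_eq_sup 1 l, h1'] at h'
            exact Nat.le_zero.mp h'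
          have hdz : d = 0 := by
            ext i
            fin_cases i
            · exact h0
            · exact h1''
          simp [hdz]
        omega
      · omega
    set τ : Equiv.Perm (Fin 2) := Equiv.swap 0 1 with hτ
    have hττ : ∀ q : MvPolynomial (Fin 2) ℝ, rename τ (rename τ q) = q := by
      intro q
      rw [rename_rename]
      have : (⇑τ ∘ ⇑τ) = id := by
        funext x
        simp [hτ, Equiv.swap_apply_self]
      rw [this, rename_id, AlgHom.id_apply]
    have hlt : (rename τ l).totalDegree = 1 := by
      refine le_antisymm (hl ▸ totalDegree_rename_le _ _) ?_
      have := totalDegree_rename_le τ (rename τ l)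
      rw [hττ l, hl] at this
      exact this
    have hdt : (rename τ l).degreeOf 0 = 1 := by
      have := degreeOf_rename_of_injective (p := l) (f := τ) τ.injective 1
      rw [show τ 1 = 0 by simp [hτ]] at this
      rw [this]; exact hd1
    have hvt : ∀ v : Fin 2 → ℝ, eval v (rename τ l) = 0 → eval v (rename τ p) = 0 := by
      intro v hv
      rw [eval_rename] at hv ⊢
      exact h _ hv
    have := dvd_of_vanishing_aux (rename τ l) (rename τ p) hlt hdt hvt
    have h2 := map_dvd (rename τ : MvPolynomial (Fin 2) ℝ →ₐ[ℝ] MvPolynomial (Fin 2) ℝ) this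
    simpa [hττ] using h2

private lemma prime_of_tdeg_one (f : MvPolynomial (Fin 2) ℝ) (hf : f.totalDegree = 1) :
    Prime f := by
  have hf0 : f ≠ 0 := fun h0 => by simp [h0] at hf
  rw [← UniqueFactorizationMonoid.irreducible_iff_prime]
  constructor
  · intro hu
    obtain ⟨v, hv⟩ := isUnit_iff_exists_inv.mp hu
    have hv0 : v ≠ 0 := fun h0 => by simp [h0] at hv
    have := totalDegree_mul_eq hf0 hv0
    rw [hv] at this
    simp only [totalDegree_one] at this
    omega
  · intro a b hab
    have ha0 : a ≠ 0 := fun h0 => hf0 (by rw [hab, h0, zero_mul])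
    have hb0 : b ≠ 0 := fun h0 => hf0 (by rw [hab, h0, mul_zero])
    have hsum := totalDegree_mul_eq ha0 hb0
    rw [← hab, hf] at hsum
    have : a.totalDegree = 0 ∨ b.totalDegree = 0 := by omega
    rcases this with h0 | h0
    · left
      have hC := eq_C_of_tdeg_zero h0
      have hc0 : MvPolynomial.coeff 0 a ≠ 0 := fun hcc => ha0 (by rw [hC, hcc, map_zero])
      rw [hC]
      exact (isUnit_iff_ne_zero.mpr hc0).map (MvPolynomial.C : ℝ →+* MvPolynomial (Fin 2) ℝ)
    · right
      have hC := eq_C_of_tdeg_zero h0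
      have hc0 : MvPolynomial.coeff 0 b ≠ 0 := fun hcc => hb0 (by rw [hC, hcc, map_zero])
      rw [hC]
      exact (isUnit_iff_ne_zero.mpr hc0).map (MvPolynomial.C : ℝ →+* MvPolynomial (Fin 2) ℝ)
/-- If `ℓ₀, ℓ₁, ℓ₂` are affine polynomials on ℝ² of degree exactly 1 that are
pairwise non-proportional, and a polynomial `p` vanishes on each of the three
lines `{ℓᵢ = 0}`, then `ℓ₀ℓ₁ℓ₂` divides `p`, with quotient of degree at most
`deg p − 3`. -/
theorem triangle_bubble_factorization (l : Fin 3 → MvPolynomial (Fin 2) ℝ)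
    (hdeg : ∀ i, (l i).totalDegree = 1)
    (hprop : ∀ i j : Fin 3, i ≠ j → ∀ c : ℝ, l i ≠ C c * l j)
    (p : MvPolynomial (Fin 2) ℝ)
    (hvan : ∀ i : Fin 3, ∀ v : Fin 2 → ℝ, eval v (l i) = 0 → eval v p = 0) :
    ∃ q : MvPolynomial (Fin 2) ℝ,
      p = l 0 * l 1 * l 2 * q ∧ q.totalDegree ≤ p.totalDegree - 3 := by
  have hlne : ∀ i, l i ≠ 0 := fun i h0 => by
    have := hdeg i; rw [h0] at this; simp at this
  have hnd : ∀ i j : Fin 3, i ≠ j → ¬ l i ∣ l j := by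
    rintro i j hij ⟨u, hu⟩
    have hu0 : u ≠ 0 := fun h0 => hlne j (by rw [hu, h0, mul_zero])
    have hdu : u.totalDegree = 0 := by
      have h' := totalDegree_mul_eq (hlne i) hu0
      rw [← hu, hdeg i, hdeg j] at h'
      omega
    exact hprop j i hij.symm (MvPolynomial.coeff 0 u)
      (by rw [hu]; nth_rewrite 1 [eq_C_of_tdeg_zero hdu]; ring)
  by_cases hp : p = 0
  · exact ⟨0, by rw [hp, mul_zero], by simp⟩
  obtain ⟨a, ha⟩ := dvd_of_vanishing (l 0) p (hdeg 0) (hvan 0)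
  have h1 : l 1 ∣ a := by
    have hd : l 1 ∣ l 0 * a := ha ▸ dvd_of_vanishing (l 1) p (hdeg 1) (hvan 1)
    exact ((prime_of_tdeg_one (l 1) (hdeg 1)).dvd_or_dvd hd).resolve_left
      (hnd 1 0 (by decide))
  obtain ⟨b, hb⟩ := h1
  have h2 : l 2 ∣ b := by
    have hd : l 2 ∣ l 0 * (l 1 * b) := by
      rw [← hb, ← ha]; exact dvd_of_vanishing (l 2) p (hdeg 2) (hvan 2)
    have hpr := prime_of_tdeg_one (l 2) (hdeg 2)
    rcases hpr.dvd_or_dvd hd with h' | h'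
    · exact absurd h' (hnd 2 0 (by decide))
    · exact (hpr.dvd_or_dvd h').resolve_left (hnd 2 1 (by decide))
  obtain ⟨q, hq⟩ := h2
  refine ⟨q, by rw [ha, hb, hq]; ring, ?_⟩
  have hq0 : q ≠ 0 := by
    rintro rfl
    apply hp
    rw [ha, hb, hq, mul_zero, mul_zero, mul_zero]
  have hb0 : b ≠ 0 := mul_ne_zero (hlne 2) hq0 |> fun h => hq ▸ h
  have ha0 : a ≠ 0 := mul_ne_zero (hlne 1) hb0 |> fun h => hb ▸ h
  have e1 : p.totalDegree = 1 + a.totalDegree := by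
    rw [ha, totalDegree_mul_eq (hlne 0) ha0, hdeg 0]
  have e2 : a.totalDegree = 1 + b.totalDegree := by
    rw [hb, totalDegree_mul_eq (hlne 1) hb0, hdeg 1]
  have e3 : b.totalDegree = 1 + q.totalDegree := by
    rw [hq, totalDegree_mul_eq (hlne 2) hq0, hdeg 2]
  omega
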